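/- For every real number t > 0, log(1/t) ≥ 1 − t + (t − 1)² / (2·max(1, t²)). -/

import Mathlib

open Set

lemma aux_le_one (t : ℝ) (ht : 0 < t) (ht1 : t ≤ 1) :
    -Real.log t ≥ 1 - t + (t - 1) ^ 2 / 2 := by
  set f : ℝ → ℝ := fun x => x - 1 - (x - 1) ^ 2 / 2 - Real.log x with hf
  have hderiv : ∀ x ∈ interior (Icc t 1), deriv f x ≤ 0 := by
    intro x hx
    rw [interior_Icc] at hx
    have hx0 : 0 < x := lt_trans ht hx.1
    have hd : HasDerivAt f (1 - (2 * (x - 1) ^ 1 * 1) / 2 - 1 / x) x := by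
      have h1 : HasDerivAt (fun x : ℝ => x - 1) 1 x := (hasDerivAt_id x).sub_const 1
      have h2 := (h1.pow 2).div_const 2
      have h3 := Real.hasDerivAt_log hx0.ne'
      exact ((h1.sub h2).sub h3).congr_deriv (by norm_num)
    rw [hd.deriv]
    have : 1 - (2 * (x - 1) ^ 1 * 1) / 2 - 1 / x = -((x - 1) ^ 2 / x) := by
      field_simp; ring
    rw [this]
    have : (x - 1) ^ 2 / x ≥ 0 := div_nonneg (sq_nonneg _) hx0.le
    linarith
  have hcont : ContinuousOn f (Icc t 1) := by
    apply ContinuousOn.sub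
    · fun_prop
    · exact Real.continuousOn_log.mono (by
        intro x hx
        simp only [mem_compl_iff, mem_singleton_iff]
        have := hx.1
        intro h; rw [h] at this; linarith)
  have hdiff : DifferentiableOn ℝ f (interior (Icc t 1)) := by
    rw [interior_Icc]
    intro x hx
    have hx0 : 0 < x := lt_trans ht hx.1
    apply DifferentiableAt.differentiableWithinAt
    apply DifferentiableAt.sub
    · fun_prop
    · exact Real.differentiableAt_log hx0.ne'
  have hanti := antitoneOn_of_deriv_nonpos (convex_Icc t 1) hcont hdiff hderiv
  have h := hanti (left_mem_Icc.2 ht1) (right_mem_Icc.2 ht1) ht1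
  have hf1 : f 1 = 0 := by simp [hf]
  have : f t ≥ 0 := by rw [← hf1]; exact h
  simp only [hf] at this
  nlinarith [this]

lemma aux_ge_one (t : ℝ) (ht : 1 ≤ t) :
    -Real.log t ≥ 1 - t + (t - 1) ^ 2 / (2 * t ^ 2) := by
  set f : ℝ → ℝ := fun x => -Real.log x - (1 - x) - (x - 1) ^ 2 / (2 * x ^ 2) with hf
  have hderiv : ∀ x ∈ interior (Icc 1 t), 0 ≤ deriv f x := by
    intro x hx
    rw [interior_Icc] at hx
    have hx0 : (0:ℝ) < x := lt_trans one_pos hx.1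
    have hd : HasDerivAt f (-(1/x) - (-1) -
        ((2 * (x-1)^1 * 1) * (2 * x^2) - (x-1)^2 * (2 * (2 * x^1 * 1))) / (2 * x^2)^2) x := by
      have h1 : HasDerivAt (fun x : ℝ => x - 1) 1 x := (hasDerivAt_id x).sub_const 1
      have h2 := h1.pow 2
      have h3 : HasDerivAt (fun x : ℝ => 2 * x ^ 2) (2 * (2 * x ^ 1 * 1)) x := by
        simpa using ((hasDerivAt_id x).pow 2).const_mul 2
      have h4 := h2.div h3 (by positivity)
      have h5 := (Real.hasDerivAt_log hx0.ne').neg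
      have h6 : HasDerivAt (fun x : ℝ => 1 - x) (-1) x := by
        simpa using (hasDerivAt_id x).const_sub 1
      exact ((h5.sub h6).sub h4).congr_deriv (by norm_num)
    rw [hd.deriv]
    have hx1 : 1 < x := hx.1
    have key : -(1/x) - (-1) -
        ((2 * (x-1)^1 * 1) * (2 * x^2) - (x-1)^2 * (2 * (2 * x^1 * 1))) / (2 * x^2)^2
        = (x - 1) * (x^2 - 1) / x^3 := by
      field_simp
      ring
    rw [key]
    apply div_nonneg _ (by positivity)
    nlinarith
  have hcont : ContinuousOn f (Icc 1 t) := by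
    apply ContinuousOn.sub
    apply ContinuousOn.sub
    · exact (Real.continuousOn_log.mono (by
        intro x hx
        simp only [mem_compl_iff, mem_singleton_iff]
        have := hx.1
        intro h; rw [h] at this; linarith)).neg
    · fun_prop
    · apply ContinuousOn.div
      · fun_prop
      · fun_prop
      · intro x hx
        have : (1:ℝ) ≤ x := hx.1
        positivity
  have hdiff : DifferentiableOn ℝ f (interior (Icc 1 t)) := by
    rw [interior_Icc]
    intro x hx
    have hx0 : (0:ℝ) < x := lt_trans one_pos hx.1
    apply DifferentiableAt.differentiableWithinAt
    apply DifferentiableAt.sub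
    apply DifferentiableAt.sub
    · exact (Real.differentiableAt_log hx0.ne').neg
    · fun_prop
    · apply DifferentiableAt.div
      · fun_prop
      · fun_prop
      · positivity
  have hmono := monotoneOn_of_deriv_nonneg (convex_Icc 1 t) hcont hdiff hderiv
  have h := hmono (left_mem_Icc.2 ht) (right_mem_Icc.2 ht) ht
  have hf1 : f 1 = 0 := by norm_num [hf]
  have : f t ≥ 0 := by rw [← hf1]; exact h
  simp only [hf] at this
  linarith

/-- For every real `t > 0`, `log(1/t) ≥ 1 − t + (t − 1)² / (2·max(1, t²))`. -/
theorem log_inv_ge_of_pos_sq (t : ℝ) (ht : 0 < t) :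
    Real.log (1 / t) ≥ 1 - t + (t - 1) ^ 2 / (2 * max 1 (t ^ 2)) := by
  rw [one_div, Real.log_inv]
  rcases le_total t 1 with h | h
  · have hmax : max 1 (t ^ 2) = 1 := max_eq_left (by nlinarith)
    rw [hmax]
    simpa using aux_le_one t ht h
  · have hmax : max 1 (t ^ 2) = t ^ 2 := max_eq_right (by nlinarith)
    rw [hmax]
    exact aux_ge_one t h
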